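/- arXiv:1501.00616 — 2 statements merged into one kernel-verified Lean document; each statement's English description precedes it below -/
import Mathlib

section
/- Let 0 < δ < 1/2, κ > 0, C ≥ 0, L > 0 and M ≥ 1. Suppose Ω, r, φ satisfy on Q equations (N1), (N2), (N3) and the axis normalization, together with: |g(y)| ≤ L|y| for all y ∈ ℝ; 1/M ≤ Ω ≤ M, ϱ/M ≤ r ≤ Mϱ and 1/4 ≤ ∂_ū r ≤ M on Q; and the bootstrap bound |∂_ū φ| ≤ C r^{δ−1} on Q∖Γ. Then there exists C′ > 0, depending only on δ, κ, L, M, such that on Q∖Γ: |φ| ≤ C′ C r^{δ}, |∂_u r + 1/2| ≤ C′ C² r^{2δ}, |∂_ū r − 1/2| ≤ C′ C² r^{2δ}, |r − ϱ| ≤ C′ C² r^{2δ} ϱ, and |Ω − 1| ≤ C′ C² r^{2δ}. -/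
open Real

/-- Partial derivative in the null variable `u`. -/
noncomputable def pdu (f : ℝ → ℝ → ℝ) (u v : ℝ) : ℝ := deriv (fun u' => f u' v) u

/-- Partial derivative in the null variable `ū`. -/
noncomputable def pdub (f : ℝ → ℝ → ℝ) (u v : ℝ) : ℝ := deriv (fun v' => f u v') v

/-- The rescaled double-null domain `Q = {(u,ū) : −2 ≤ u ≤ ū ≤ 0}`. -/
def Qset : Set (ℝ × ℝ) := {p | -2 ≤ p.1 ∧ p.1 ≤ p.2 ∧ p.2 ≤ 0}

/-- `ϱ = (ū − u)/2`. -/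
noncomputable def vrho (p : ℝ × ℝ) : ℝ := (p.2 - p.1) / 2

/-- The axis normalization `r = 0`, `∂_ū r = 1/2`, `∂_u r = −1/2`, `Ω = 1`, `φ = 0` on
the axis `Γ = {u = ū}` (inside `Q`). -/
def AxisNormalized (Ω r φ : ℝ → ℝ → ℝ) : Prop :=
  ∀ u ∈ Set.Icc (-2 : ℝ) 0,
    r u u = 0 ∧ pdub r u u = 1 / 2 ∧ pdu r u u = -(1 / 2) ∧ Ω u u = 1 ∧ φ u u = 0

/-- `Ω`, `r`, `φ` are `Cⁿ` on a neighborhood of `Q`. -/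
def SmoothNearQ (n : ℕ) (Ω r φ : ℝ → ℝ → ℝ) : Prop :=
  ∃ V : Set (ℝ × ℝ), IsOpen V ∧ Qset ⊆ V ∧
    ContDiffOn ℝ n (fun p : ℝ × ℝ => Ω p.1 p.2) V ∧
    ContDiffOn ℝ n (fun p : ℝ × ℝ => r p.1 p.2) V ∧
    ContDiffOn ℝ n (fun p : ℝ × ℝ => φ p.1 p.2) V

/-- Equation (N1): `∂_u(Ω^{−2} ∂_u r) = −Ω^{−2} κ r (∂_u φ)²`. -/
def EqN1 (κ : ℝ) (Ω r φ : ℝ → ℝ → ℝ) (u v : ℝ) : Prop :=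
  pdu (fun u' v' => ((Ω u' v') ^ 2)⁻¹ * pdu r u' v') u v
    = -(((Ω u v) ^ 2)⁻¹ * κ * r u v * (pdu φ u v) ^ 2)

/-- Equation (N2): `∂_ū(Ω^{−2} ∂_ū r) = −Ω^{−2} κ r (∂_ū φ)²`. -/
def EqN2 (κ : ℝ) (Ω r φ : ℝ → ℝ → ℝ) (u v : ℝ) : Prop :=
  pdub (fun u' v' => ((Ω u' v') ^ 2)⁻¹ * pdub r u' v') u v
    = -(((Ω u v) ^ 2)⁻¹ * κ * r u v * (pdub φ u v) ^ 2)

/-- Equation (N3): `∂_u ∂_ū r = κ Ω² g(φ)² / (4r)`. -/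
def EqN3 (κ : ℝ) (g : ℝ → ℝ) (Ω r φ : ℝ → ℝ → ℝ) (u v : ℝ) : Prop :=
  pdu (pdub r) u v = κ * (Ω u v) ^ 2 * (g (φ u v)) ^ 2 / (4 * r u v)

/-- Equation (N4): `∂_u(r ∂_ū φ) + ∂_ū(r ∂_u φ) = −Ω² g(φ)g′(φ)/(2r)`. -/
def EqN4 (g : ℝ → ℝ) (Ω r φ : ℝ → ℝ → ℝ) (u v : ℝ) : Prop :=
  pdu (fun u' v' => r u' v' * pdub φ u' v') u v
      + pdub (fun u' v' => r u' v' * pdu φ u' v') u v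
    = -((Ω u v) ^ 2 * g (φ u v) * deriv g (φ u v) / (2 * r u v))

/-- Equation (N5): `∂_u ∂_ū (log Ω) = −(κ/2) ∂_u φ ∂_ū φ − (κΩ²/8) g(φ)²/r²`. -/
def EqN5 (κ : ℝ) (g : ℝ → ℝ) (Ω r φ : ℝ → ℝ → ℝ) (u v : ℝ) : Prop :=
  pdu (pdub (fun u' v' => Real.log (Ω u' v'))) u v
    = -((κ / 2) * pdu φ u v * pdub φ u v)
      - (κ * (Ω u v) ^ 2 / 8) * (g (φ u v)) ^ 2 / (r u v) ^ 2

section helpers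
open Set



lemma pdub_hasDerivAt' {f : ℝ → ℝ → ℝ} {u v : ℝ}
    (hd : DifferentiableAt ℝ (fun p : ℝ × ℝ => f p.1 p.2) (u, v)) :
    HasDerivAt (fun v' => f u v')
      (fderiv ℝ (fun p : ℝ × ℝ => f p.1 p.2) (u, v) (0, 1)) v := by
  have h := hd.hasFDerivAt.comp_hasDerivAt v
    ((hasDerivAt_const v u).prodMk (hasDerivAt_id v))
  exact h

lemma pdu_hasDerivAt' {f : ℝ → ℝ → ℝ} {u v : ℝ}
    (hd : DifferentiableAt ℝ (fun p : ℝ × ℝ => f p.1 p.2) (u, v)) :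
    HasDerivAt (fun u' => f u' v)
      (fderiv ℝ (fun p : ℝ × ℝ => f p.1 p.2) (u, v) (1, 0)) u := by
  have h := hd.hasFDerivAt.comp_hasDerivAt u
    ((hasDerivAt_id u).prodMk (hasDerivAt_const u v))
  exact h

lemma hasDerivAt_rewrap_ub {f : ℝ → ℝ → ℝ} {a b c : ℝ}
    (h : HasDerivAt (fun v' => f a v') c b) :
    HasDerivAt (fun v' => f a v') (pdub f a b) b := by
  rwa [show pdub f a b = c from h.deriv]

lemma hasDerivAt_rewrap_u {f : ℝ → ℝ → ℝ} {a b c : ℝ}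
    (h : HasDerivAt (fun u' => f u' b) c a) :
    HasDerivAt (fun u' => f u' b) (pdu f a b) a := by
  rwa [show pdu f a b = c from h.deriv]

section lines
variable {f : ℝ → ℝ → ℝ} {V : Set (ℝ × ℝ)} {a b : ℝ}

variable (hV : IsOpen V) (hf : ContDiffOn ℝ 2 (fun p : ℝ × ℝ => f p.1 p.2) V)

set_option maxHeartbeats 1000000

omit hV hf in
lemma dummy_nothing : True := trivial

include hV hf

lemma diffAt_of_C2 (h : (a, b) ∈ V) :
    DifferentiableAt ℝ (fun p : ℝ × ℝ => f p.1 p.2) (a, b) :=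
  (hf.contDiffAt (hV.mem_nhds h)).differentiableAt (by norm_num)

lemma fderiv_eval_diffAt (h : (a, b) ∈ V) (w : ℝ × ℝ) :
    DifferentiableAt ℝ
      (fun p : ℝ × ℝ => fderiv ℝ (fun q : ℝ × ℝ => f q.1 q.2) p w) (a, b) := by
  have hD : ContDiffOn ℝ 1 (fderiv ℝ (fun q : ℝ × ℝ => f q.1 q.2)) V :=
    hf.fderiv_of_isOpen hV (by norm_num)
  have h1 : DifferentiableAt ℝ (fderiv ℝ (fun q : ℝ × ℝ => f q.1 q.2)) (a, b) :=
    (hD.differentiableOn one_ne_zero).differentiableAt (hV.mem_nhds h)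
  have h2 := ((ContinuousLinearMap.apply ℝ ℝ w).differentiableAt).comp (a, b) h1
  exact h2

lemma pdub_eq_on_V (h : (a, b) ∈ V) :
    pdub f a b = fderiv ℝ (fun q : ℝ × ℝ => f q.1 q.2) (a, b) (0, 1) :=
  (pdub_hasDerivAt' (diffAt_of_C2 hV hf h)).deriv

lemma pdu_eq_on_V (h : (a, b) ∈ V) :
    pdu f a b = fderiv ℝ (fun q : ℝ × ℝ => f q.1 q.2) (a, b) (1, 0) :=
  (pdu_hasDerivAt' (diffAt_of_C2 hV hf h)).deriv

omit hf in
lemma ev_mem_line_u (h : (a, b) ∈ V) : ∀ᶠ v' in nhds b, ((a, v') : ℝ × ℝ) ∈ V := by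
  have : {v' : ℝ | ((a, v') : ℝ × ℝ) ∈ V} ∈ nhds b :=
    (hV.preimage (Continuous.prodMk continuous_const continuous_id)).mem_nhds h
  exact this

omit hf in
lemma ev_mem_line_v (h : (a, b) ∈ V) : ∀ᶠ u' in nhds a, ((u', b) : ℝ × ℝ) ∈ V := by
  have : {u' : ℝ | ((u', b) : ℝ × ℝ) ∈ V} ∈ nhds a :=
    (hV.preimage (Continuous.prodMk continuous_id continuous_const)).mem_nhds h
  exact this

lemma ex_pdub_line_u (h : (a, b) ∈ V) :
    ∃ c, HasDerivAt (fun v' => pdub f a v') c b := by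
  have hnice := pdub_hasDerivAt'
    (f := fun x y => fderiv ℝ (fun q : ℝ × ℝ => f q.1 q.2) (x, y) (0, 1))
    (u := a) (v := b) (fderiv_eval_diffAt hV hf h (0, 1))
  refine ⟨_, hnice.congr_of_eventuallyEq ?_⟩
  filter_upwards [ev_mem_line_u hV h] with v' hv'
  exact pdub_eq_on_V hV hf hv'

lemma ex_pdub_line_v (h : (a, b) ∈ V) :
    ∃ c, HasDerivAt (fun u' => pdub f u' b) c a := by
  have hnice := pdu_hasDerivAt'
    (f := fun x y => fderiv ℝ (fun q : ℝ × ℝ => f q.1 q.2) (x, y) (0, 1))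
    (u := a) (v := b) (fderiv_eval_diffAt hV hf h (0, 1))
  refine ⟨_, hnice.congr_of_eventuallyEq ?_⟩
  filter_upwards [ev_mem_line_v hV h] with u' hu'
  exact pdub_eq_on_V hV hf hu'

lemma ex_pdu_line_u (h : (a, b) ∈ V) :
    ∃ c, HasDerivAt (fun v' => pdu f a v') c b := by
  have hnice := pdub_hasDerivAt'
    (f := fun x y => fderiv ℝ (fun q : ℝ × ℝ => f q.1 q.2) (x, y) (1, 0))
    (u := a) (v := b) (fderiv_eval_diffAt hV hf h (1, 0))
  refine ⟨_, hnice.congr_of_eventuallyEq ?_⟩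
  filter_upwards [ev_mem_line_u hV h] with v' hv'
  exact pdu_eq_on_V hV hf hv'

lemma pdu_pdub_comm (h : (a, b) ∈ V) :
    pdub (pdu f) a b = pdu (pdub f) a b := by
  set F : ℝ × ℝ → ℝ := fun q : ℝ × ℝ => f q.1 q.2 with hF
  set D := fderiv ℝ F with hD
  have hDdiff : DifferentiableAt ℝ D (a, b) := by
    have hD1 : ContDiffOn ℝ 1 D V := hf.fderiv_of_isOpen hV (by norm_num)
    exact (hD1.differentiableOn one_ne_zero).differentiableAt (hV.mem_nhds h)
  -- mixed partial 1 : pdub (pdu f)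
  have h1 : pdub (pdu f) a b = fderiv ℝ (fun p : ℝ × ℝ => D p (1, 0)) (a, b) (0, 1) := by
    have hev : (fun v' => pdu f a v') =ᶠ[nhds b] (fun v' => D (a, v') (1, 0)) := by
      filter_upwards [ev_mem_line_u hV h] with v' hv'
      exact pdu_eq_on_V hV hf hv'
    have e1 : deriv (fun v' => pdu f a v') b = deriv (fun v' => D (a, v') (1, 0)) b :=
      hev.deriv_eq
    have e2 := (pdub_hasDerivAt' (f := fun x y => D (x, y) (1, 0)) (u := a) (v := b)
      (fderiv_eval_diffAt hV hf h (1, 0))).deriv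
    exact e1.trans e2
  have h2 : pdu (pdub f) a b = fderiv ℝ (fun p : ℝ × ℝ => D p (0, 1)) (a, b) (1, 0) := by
    have hev : (fun u' => pdub f u' b) =ᶠ[nhds a] (fun u' => D (u', b) (0, 1)) := by
      filter_upwards [ev_mem_line_v hV h] with u' hu'
      exact pdub_eq_on_V hV hf hu'
    have e1 : deriv (fun u' => pdub f u' b) a = deriv (fun u' => D (u', b) (0, 1)) a :=
      hev.deriv_eq
    have e2 := (pdu_hasDerivAt' (f := fun x y => D (x, y) (0, 1)) (u := a) (v := b)
      (fderiv_eval_diffAt hV hf h (0, 1))).deriv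
    exact e1.trans e2
  -- express the outer fderivs through fderiv of D
  have h3 : ∀ w : ℝ × ℝ, fderiv ℝ (fun p : ℝ × ℝ => D p w) (a, b)
      = (ContinuousLinearMap.apply ℝ ℝ w).comp (fderiv ℝ D (a, b)) := by
    intro w
    have := ((ContinuousLinearMap.apply ℝ ℝ w).hasFDerivAt.comp (a, b)
      hDdiff.hasFDerivAt).fderiv
    exact this
  -- symmetry of the second derivative
  have hev' : ∀ᶠ y in nhds (a, b), HasFDerivAt F (D y) y := by
    filter_upwards [hV.mem_nhds h] with y hy
    exact ((hf.contDiffAt (hV.mem_nhds hy)).differentiableAt (by norm_num)).hasFDerivAt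
  have hsym := second_derivative_symmetric_of_eventually hev' hDdiff.hasFDerivAt
    ((0 : ℝ), (1 : ℝ)) ((1 : ℝ), (0 : ℝ))
  rw [h1, h2, h3, h3]
  simpa using hsym
end lines

lemma rpow_low {x c e : ℝ} (hx : 0 < x) (hc : 1 ≤ c) (he1 : -1 ≤ e) (he2 : e ≤ 0) :
    (x / c) ^ e ≤ c * x ^ e := by
  have hc0 : (0 : ℝ) < c := lt_of_lt_of_le one_pos hc
  rw [Real.div_rpow hx.le hc0.le, div_eq_mul_inv, ← Real.rpow_neg hc0.le]
  calc x ^ e * c ^ (-e) ≤ x ^ e * c := by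
        apply mul_le_mul_of_nonneg_left _ (Real.rpow_nonneg hx.le e)
        calc c ^ (-e) ≤ c ^ (1 : ℝ) :=
              Real.rpow_le_rpow_of_exponent_le hc (by linarith)
          _ = c := Real.rpow_one c
    _ = c * x ^ e := by ring

lemma rpow_high {x c e : ℝ} (hx : 0 ≤ x) (hc : 1 ≤ c) (he1 : 0 ≤ e) (he2 : e ≤ 1) :
    (c * x) ^ e ≤ c * x ^ e := by
  have hc0 : (0 : ℝ) ≤ c := le_trans zero_le_one hc
  rw [Real.mul_rpow hc0 hx]
  apply mul_le_mul_of_nonneg_right _ (Real.rpow_nonneg hx e)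
  calc c ^ e ≤ c ^ (1 : ℝ) := Real.rpow_le_rpow_of_exponent_le hc he2
    _ = c := Real.rpow_one c

/-- generic comparison: if `f' ≤ P'` on `(a,b)` then `f b - f a ≤ P b - P a`. -/
lemma ftc_mono {a b : ℝ} (hab : a ≤ b) {f P f' P' : ℝ → ℝ}
    (hfc : ContinuousOn f (Icc a b)) (hPc : ContinuousOn P (Icc a b))
    (hfd : ∀ s ∈ Ioo a b, HasDerivAt f (f' s) s)
    (hPd : ∀ s ∈ Ioo a b, HasDerivAt P (P' s) s)
    (hle : ∀ s ∈ Ioo a b, f' s ≤ P' s) :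
    f b - f a ≤ P b - P a := by
  have h : MonotoneOn (fun s => P s - f s) (Icc a b) := by
    apply monotoneOn_of_deriv_nonneg (convex_Icc a b) (hPc.sub hfc)
    · intro s hs
      rw [interior_Icc] at hs
      exact ((hPd s hs).sub (hfd s hs)).differentiableAt.differentiableWithinAt
    · intro s hs
      rw [interior_Icc] at hs
      rw [((hPd s hs).sub (hfd s hs)).deriv]
      linarith [hle s hs]
  have := h (left_mem_Icc.2 hab) (right_mem_Icc.2 hab) hab
  dsimp at this; linarith

/-- FTC bound with power-law blow-up of the derivative at the left endpoint. -/
lemma ftc_pow_left {a b α K : ℝ} {f f' : ℝ → ℝ} (hab : a < b) (hα : 0 < α)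
    (hfc : ContinuousOn f (Icc a b))
    (hfd : ∀ s ∈ Ioo a b, HasDerivAt f (f' s) s)
    (hb : ∀ s ∈ Ioo a b, |f' s| ≤ K * (s - a) ^ (α - 1)) :
    |f b - f a| ≤ K / α * (b - a) ^ α := by
  set P : ℝ → ℝ := fun s => K / α * (s - a) ^ α with hP
  have hPc : ContinuousOn P (Icc a b) := by
    apply ContinuousOn.mul continuousOn_const
    exact (continuousOn_id.sub continuousOn_const).rpow_const
      (fun x _ => Or.inr hα.le)
  have hPd : ∀ s ∈ Ioo a b, HasDerivAt P (K * (s - a) ^ (α - 1)) s := by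
    intro s hs
    have h0 : s - a ≠ 0 := sub_ne_zero.2 (ne_of_gt hs.1)
    have h1 : HasDerivAt (fun s => (s - a) ^ α) (α * (s - a) ^ (α - 1) * 1) s :=
      by have := (Real.hasDerivAt_rpow_const (p := α) (Or.inl h0)).comp s ((hasDerivAt_id s).sub_const a); exact this
    have h2 := h1.const_mul (K / α)
    exact h2.congr_deriv (by rw [mul_one, ← mul_assoc, div_mul_cancel₀ _ hα.ne'])
  have hPa : P a = 0 := by simp [hP, Real.zero_rpow hα.ne']
  have h1 : f b - f a ≤ K / α * (b - a) ^ α := by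
    have := ftc_mono hab.le hfc hPc hfd hPd
      (fun s hs => (abs_le.1 (hb s hs)).2)
    rw [hPa] at this; simp only [hP] at this; linarith
  have h2 : -(K / α * (b - a) ^ α) ≤ f b - f a := by
    have := ftc_mono hab.le hfc.neg hPc (fun s hs => (hfd s hs).neg) hPd
      (fun s hs => by have := (abs_le.1 (hb s hs)).1; linarith)
    rw [hPa] at this; simp only [hP, Pi.neg_apply] at this; linarith
  exact abs_le.2 ⟨h2, h1⟩

/-- FTC bound with power-law blow-up of the derivative at the right endpoint. -/
lemma ftc_pow_right {a b α K : ℝ} {f f' : ℝ → ℝ} (hab : a < b) (hα : 0 < α)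
    (hfc : ContinuousOn f (Icc a b))
    (hfd : ∀ s ∈ Ioo a b, HasDerivAt f (f' s) s)
    (hb : ∀ s ∈ Ioo a b, |f' s| ≤ K * (b - s) ^ (α - 1)) :
    |f b - f a| ≤ K / α * (b - a) ^ α := by
  set P : ℝ → ℝ := fun s => -(K / α) * (b - s) ^ α with hP
  have hPc : ContinuousOn P (Icc a b) := by
    apply ContinuousOn.mul continuousOn_const
    exact (continuousOn_const.sub continuousOn_id).rpow_const
      (fun x _ => Or.inr hα.le)
  have hPd : ∀ s ∈ Ioo a b, HasDerivAt P (K * (b - s) ^ (α - 1)) s := by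
    intro s hs
    have h0 : b - s ≠ 0 := sub_ne_zero.2 (ne_of_gt hs.2)
    have hbs : HasDerivAt (fun s : ℝ => b - s) (-1) s := by
      simpa using (hasDerivAt_id s).const_sub b
    have h1 : HasDerivAt (fun s => (b - s) ^ α) (α * (b - s) ^ (α - 1) * (-1)) s :=
      (Real.hasDerivAt_rpow_const (Or.inl h0)).comp s hbs
    have h2 := h1.const_mul (-(K / α))
    exact h2.congr_deriv (by rw [mul_neg_one, neg_mul_neg, ← mul_assoc, div_mul_cancel₀ _ hα.ne'])
  have hPb : P b = 0 := by simp [hP, Real.zero_rpow hα.ne']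
  have hPa : P a = -(K / α) * (b - a) ^ α := rfl
  have h1 : f b - f a ≤ K / α * (b - a) ^ α := by
    have := ftc_mono hab.le hfc hPc hfd hPd
      (fun s hs => (abs_le.1 (hb s hs)).2)
    rw [hPb, hPa] at this; linarith
  have h2 : -(K / α * (b - a) ^ α) ≤ f b - f a := by
    have := ftc_mono hab.le hfc.neg hPc (fun s hs => (hfd s hs).neg) hPd
      (fun s hs => by have := (abs_le.1 (hb s hs)).1; linarith)
    rw [hPb, hPa] at this; simp only [Pi.neg_apply] at this; linarith
  exact abs_le.2 ⟨h2, h1⟩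

end helpers

set_option maxHeartbeats 1600000

/-- Consequences of the bootstrap assumption `|∂_ū φ| ≤ C r^{δ−1}`: there is a constant
`C′ > 0` depending only on `δ, κ, L, M` such that on `Q∖Γ` one has `|φ| ≤ C′C r^δ`,
`|∂_u r + 1/2| ≤ C′C² r^{2δ}`, `|∂_ū r − 1/2| ≤ C′C² r^{2δ}`, `|r − ϱ| ≤ C′C² r^{2δ} ϱ`
and `|Ω − 1| ≤ C′C² r^{2δ}`. -/
theorem bootstrap_consequences
    (δ κ L M : ℝ) (hδ0 : 0 < δ) (hδ : δ < 1 / 2) (hκ : 0 < κ) (hL : 0 < L) (hM : 1 ≤ M) :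
    ∃ C' > (0:ℝ),
      ∀ (C : ℝ) (g : ℝ → ℝ) (Ω r φ : ℝ → ℝ → ℝ),
        0 ≤ C →
        ContDiff ℝ 1 g →
        SmoothNearQ 2 Ω r φ →
        (∀ p ∈ Qset, p.1 < p.2 → 0 < r p.1 p.2) →
        (∀ p ∈ Qset, p.1 < p.2 → EqN1 κ Ω r φ p.1 p.2) →
        (∀ p ∈ Qset, p.1 < p.2 → EqN2 κ Ω r φ p.1 p.2) →
        (∀ p ∈ Qset, p.1 < p.2 → EqN3 κ g Ω r φ p.1 p.2) →
        AxisNormalized Ω r φ →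
        (∀ y : ℝ, |g y| ≤ L * |y|) →
        (∀ p ∈ Qset, M⁻¹ ≤ Ω p.1 p.2 ∧ Ω p.1 p.2 ≤ M) →
        (∀ p ∈ Qset, vrho p / M ≤ r p.1 p.2 ∧ r p.1 p.2 ≤ M * vrho p) →
        (∀ p ∈ Qset, 1 / 4 ≤ pdub r p.1 p.2 ∧ pdub r p.1 p.2 ≤ M) →
        (∀ p ∈ Qset, p.1 < p.2 → |pdub φ p.1 p.2| ≤ C * r p.1 p.2 ^ (δ - 1)) →
        ∀ p ∈ Qset, p.1 < p.2 →
          |φ p.1 p.2| ≤ C' * C * r p.1 p.2 ^ δ ∧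
          |pdu r p.1 p.2 + 1 / 2| ≤ C' * C ^ 2 * r p.1 p.2 ^ (2 * δ) ∧
          |pdub r p.1 p.2 - 1 / 2| ≤ C' * C ^ 2 * r p.1 p.2 ^ (2 * δ) ∧
          |r p.1 p.2 - vrho p| ≤ C' * C ^ 2 * r p.1 p.2 ^ (2 * δ) * vrho p ∧
          |Ω p.1 p.2 - 1| ≤ C' * C ^ 2 * r p.1 p.2 ^ (2 * δ) := by
  have hM0 : (0:ℝ) < M := lt_of_lt_of_le one_pos hM
  have hδ2 : (0:ℝ) < 2*δ := by linarith
  have h2δ1 : 2*δ ≤ 1 := by linarith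
  set A := 4*M^2/δ with hAdef
  have hApos : 0 < A := div_pos (by nlinarith) hδ0
  set B2 := κ*M^4*L^2*A^2/(2*δ) with hB2def
  have hB2pos : 0 < B2 :=
    div_pos (mul_pos (mul_pos (mul_pos hκ (pow_pos hM0 4)) (pow_pos hL 2)) (pow_pos hApos 2)) hδ2
  set B4 := 2*κ*M^4/δ with hB4def
  have hB4pos : 0 < B4 := div_pos (by nlinarith [pow_pos hM0 4]) hδ0
  set B3 := 2*B2*M^2 with hB3def
  have hB3pos : 0 < B3 := by nlinarith [pow_pos hM0 2]
  set B5 := 4*M^2*(B4+B2) with hB5def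
  have hB5pos : 0 < B5 := by nlinarith [pow_pos hM0 2]
  refine ⟨A + B2 + B3 + B5, by linarith, ?_⟩
  intro C g Ω r φ hC hgc hsm hrpos hN1 hN2 hN3 hax hgL hΩb hrb hdrb hboot
  obtain ⟨V, hVo, hQV, hΩsm, hrsm, hφsm⟩ := hsm
  -- basic geometric facts
  have hrlow : ∀ a b : ℝ, ((a,b) : ℝ×ℝ) ∈ Qset → (b - a)/(2*M) ≤ r a b := by
    intro a b hQ
    have h' : (b-a)/2/M ≤ r a b := (hrb (a,b) hQ).1
    rwa [div_div] at h'
  have hrhigh : ∀ a b : ℝ, ((a,b) : ℝ×ℝ) ∈ Qset → b - a ≤ 2*M*r a b := by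
    intro a b hQ
    have h : (b-a)/2/M ≤ r a b := (hrb (a,b) hQ).1
    have h2 := mul_le_mul_of_nonneg_left h (by linarith : (0:ℝ) ≤ 2*M)
    calc b - a = 2*M*((b-a)/2/M) := by field_simp
      _ ≤ 2*M*r a b := h2
  have hrub : ∀ a b : ℝ, ((a,b) : ℝ×ℝ) ∈ Qset → r a b ≤ M*(b-a)/2 := by
    intro a b hQ
    have h : r a b ≤ M*((b-a)/2) := (hrb (a,b) hQ).2
    linarith
  have hr_e : ∀ (e : ℝ), -1 ≤ e → e ≤ 0 → ∀ a b : ℝ, ((a,b) : ℝ×ℝ) ∈ Qset → a < b →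
      r a b ^ e ≤ 2*M*(b-a)^e := by
    intro e he1 he2 a b hQ hab
    have h1 : (0:ℝ) < (b-a)/(2*M) := div_pos (by linarith) (by linarith)
    calc r a b ^ e ≤ ((b-a)/(2*M)) ^ e :=
          Real.rpow_le_rpow_of_nonpos h1 (hrlow a b hQ) he2
      _ ≤ 2*M*(b-a)^e := rpow_low (by linarith) (by linarith) he1 he2
  have hlen_e : ∀ (e : ℝ), 0 ≤ e → e ≤ 1 → ∀ a b : ℝ, ((a,b):ℝ×ℝ) ∈ Qset → a < b →
      (b-a)^e ≤ 2*M*r a b ^ e := by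
    intro e he1 he2 a b hQ hab
    have hr : (0:ℝ) < r a b := hrpos (a,b) hQ hab
    calc (b-a)^e ≤ (2*M*r a b)^e := Real.rpow_le_rpow (by linarith) (hrhigh a b hQ) he1
      _ ≤ 2*M*r a b^e := rpow_high hr.le (by linarith) he1 he2
  have hsegQ_u : ∀ u v s : ℝ, ((u,v):ℝ×ℝ) ∈ Qset → u ≤ s → s ≤ v → ((u,s):ℝ×ℝ) ∈ Qset :=
    fun u v s hQ h1 h2 => ⟨hQ.1, h1, le_trans h2 hQ.2.2⟩
  have hsegQ_v : ∀ u v s : ℝ, ((u,v):ℝ×ℝ) ∈ Qset → u ≤ s → s ≤ v → ((s,v):ℝ×ℝ) ∈ Qset :=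
    fun u v s hQ h1 h2 => ⟨le_trans hQ.1 h1, h2, hQ.2.2⟩
  -- Step 1 : bound on φ
  have claim1 : ∀ a b : ℝ, ((a,b):ℝ×ℝ) ∈ Qset → a < b → |φ a b| ≤ A * C * r a b ^ δ := by
    intro u v hQ huv
    have hrv : (0:ℝ) < r u v := hrpos (u,v) hQ huv
    have hfc : ContinuousOn (fun s => φ u s) (Set.Icc u v) := by
      intro s hs
      exact (pdub_hasDerivAt' (diffAt_of_C2 hVo hφsm
        (hQV (hsegQ_u u v s hQ hs.1 hs.2)))).continuousAt.continuousWithinAt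
    have hfd : ∀ s ∈ Set.Ioo u v, HasDerivAt (fun v' => φ u v') (pdub φ u s) s := by
      intro s hs
      exact hasDerivAt_rewrap_ub (pdub_hasDerivAt' (diffAt_of_C2 hVo hφsm
        (hQV (hsegQ_u u v s hQ hs.1.le hs.2.le))))
    have hbd : ∀ s ∈ Set.Ioo u v, |pdub φ u s| ≤ (C*(2*M)) * (s - u) ^ (δ - 1) := by
      intro s hs
      have hQs := hsegQ_u u v s hQ hs.1.le hs.2.le
      have hbt : |pdub φ u s| ≤ C * r u s ^ (δ-1) := hboot (u,s) hQs hs.1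
      calc |pdub φ u s| ≤ C * r u s ^ (δ-1) := hbt
        _ ≤ C * (2*M*(s-u)^(δ-1)) := mul_le_mul_of_nonneg_left
            (hr_e (δ-1) (by linarith) (by linarith) u s hQs hs.1) hC
        _ = (C*(2*M)) * (s-u)^(δ-1) := by ring
    have hkey := ftc_pow_left huv hδ0 hfc hfd hbd
    have hax0 : φ u u = 0 := (hax u ⟨hQ.1, le_trans hQ.2.1 hQ.2.2⟩).2.2.2.2
    rw [hax0, sub_zero] at hkey
    have hlen := hlen_e δ hδ0.le (by linarith) u v hQ huv
    calc |φ u v| ≤ (C*(2*M))/δ * (v-u)^δ := hkey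
      _ ≤ (C*(2*M))/δ * (2*M*r u v^δ) :=
          mul_le_mul_of_nonneg_left hlen (div_nonneg (by nlinarith) hδ0.le)
      _ = A * C * r u v ^ δ := by rw [hAdef]; field_simp; ring
  -- bound on the right side of (N3)
  have hN3bd : ∀ a b : ℝ, ((a,b) : ℝ×ℝ) ∈ Qset → a < b →
      |κ * (Ω a b)^2 * (g (φ a b))^2 / (4 * r a b)|
        ≤ (κ*M^2*L^2*A^2/4) * C^2 * r a b ^ (2*δ-1) := by
    intro a b hQ hab
    have hr : (0:ℝ) < r a b := hrpos (a,b) hQ hab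
    have hφb := claim1 a b hQ hab
    have hgb : |g (φ a b)| ≤ L * (A * C * r a b ^ δ) :=
      le_trans (hgL _) (mul_le_mul_of_nonneg_left hφb hL.le)
    have hΩub : Ω a b ≤ M := (hΩb (a,b) hQ).2
    have hΩlb : M⁻¹ ≤ Ω a b := (hΩb (a,b) hQ).1
    have hΩpos : 0 < Ω a b := lt_of_lt_of_le (inv_pos.2 hM0) hΩlb
    have hrpow : (r a b ^ δ)^2 = r a b ^ (2*δ) := by
      rw [sq, ← Real.rpow_add hr, two_mul]
    have hg2 : (g (φ a b))^2 ≤ L^2*A^2*C^2 * r a b ^ (2*δ) := by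
      rw [← hrpow]
      nlinarith [hgb, abs_nonneg (g (φ a b)), sq_abs (g (φ a b)),
        Real.rpow_nonneg hr.le δ, hApos.le, hL.le, hC]
    have hΩ2 : (Ω a b)^2 ≤ M^2 := by nlinarith
    have key : κ * (Ω a b)^2 * (g (φ a b))^2 ≤ κ*M^2*L^2*A^2*C^2 * r a b ^ (2*δ) := by
      have hGnn : (0:ℝ) ≤ L^2*A^2*C^2 * r a b ^ (2*δ) := by
        have := Real.rpow_nonneg hr.le (2*δ); positivity
      have h1 : (Ω a b)^2 * (g (φ a b))^2 ≤ (Ω a b)^2 * (L^2*A^2*C^2 * r a b ^ (2*δ)) :=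
        mul_le_mul_of_nonneg_left hg2 (sq_nonneg _)
      have h2 : (Ω a b)^2 * (L^2*A^2*C^2 * r a b ^ (2*δ)) ≤ M^2 * (L^2*A^2*C^2 * r a b ^ (2*δ)) :=
        mul_le_mul_of_nonneg_right hΩ2 hGnn
      nlinarith [mul_le_mul_of_nonneg_left (le_trans h1 h2) hκ.le]
    have hnum : (0:ℝ) ≤ κ * (Ω a b)^2 * (g (φ a b))^2 :=
      mul_nonneg (mul_nonneg hκ.le (sq_nonneg _)) (sq_nonneg _)
    have hden : (0:ℝ) < 4 * r a b := by linarith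
    rw [abs_of_nonneg (div_nonneg hnum hden.le), div_le_iff₀ hden]
    have hmul : r a b ^ (2*δ-1) * r a b = r a b ^ (2*δ) := by
      have h := Real.rpow_add hr (2*δ-1) 1
      rw [Real.rpow_one] at h
      rw [← h]; congr 1; ring
    calc κ * (Ω a b)^2 * (g (φ a b))^2 ≤ κ*M^2*L^2*A^2*C^2 * r a b ^ (2*δ) := key
      _ = (κ*M^2*L^2*A^2/4) * C^2 * r a b ^ (2*δ-1) * (4 * r a b) := by rw [← hmul]; ring
  -- Step 2 : bound on ∂_ū r
  have claim2ub : ∀ a b : ℝ, ((a,b):ℝ×ℝ) ∈ Qset → a < b →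
      |pdub r a b - 1/2| ≤ B2 * C^2 * r a b ^ (2*δ) := by
    intro u v hQ huv
    have hfc : ContinuousOn (fun s => pdub r s v) (Set.Icc u v) := by
      intro s hs
      obtain ⟨c, hc⟩ := ex_pdub_line_v hVo hrsm (hQV (hsegQ_v u v s hQ hs.1 hs.2))
      exact hc.continuousAt.continuousWithinAt
    have hfd : ∀ s ∈ Set.Ioo u v, HasDerivAt (fun u' => pdub r u' v) (pdu (pdub r) s v) s := by
      intro s hs
      obtain ⟨c, hc⟩ := ex_pdub_line_v hVo hrsm (hQV (hsegQ_v u v s hQ hs.1.le hs.2.le))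
      exact hasDerivAt_rewrap_u hc
    have hbd : ∀ s ∈ Set.Ioo u v, |pdu (pdub r) s v|
        ≤ ((κ*M^2*L^2*A^2/4)*C^2*(2*M)) * (v - s)^(2*δ-1) := by
      intro s hs
      have hQs := hsegQ_v u v s hQ hs.1.le hs.2.le
      have hEq : pdu (pdub r) s v = κ * (Ω s v)^2 * (g (φ s v))^2 / (4 * r s v) :=
        hN3 (s,v) hQs hs.2
      rw [hEq]
      have hnn : (0:ℝ) ≤ (κ*M^2*L^2*A^2/4)*C^2 := by positivity
      calc |κ * (Ω s v)^2 * (g (φ s v))^2 / (4 * r s v)|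
          ≤ (κ*M^2*L^2*A^2/4)*C^2 * r s v ^(2*δ-1) := hN3bd s v hQs hs.2
        _ ≤ (κ*M^2*L^2*A^2/4)*C^2 * (2*M*(v-s)^(2*δ-1)) :=
            mul_le_mul_of_nonneg_left (hr_e (2*δ-1) (by linarith) (by linarith) s v hQs hs.2) hnn
        _ = ((κ*M^2*L^2*A^2/4)*C^2*(2*M)) * (v-s)^(2*δ-1) := by ring
    have hkey := ftc_pow_right huv hδ2 hfc hfd hbd
    have haxv : pdub r v v = 1/2 := (hax v ⟨le_trans hQ.1 hQ.2.1, hQ.2.2⟩).2.1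
    rw [haxv, abs_sub_comm] at hkey
    have hlen := hlen_e (2*δ) hδ2.le h2δ1 u v hQ huv
    have hnn2 : (0:ℝ) ≤ ((κ*M^2*L^2*A^2/4)*C^2*(2*M))/(2*δ) := by positivity
    calc |pdub r u v - 1/2| ≤ ((κ*M^2*L^2*A^2/4)*C^2*(2*M))/(2*δ) * (v-u)^(2*δ) := hkey
      _ ≤ ((κ*M^2*L^2*A^2/4)*C^2*(2*M))/(2*δ) * (2*M*r u v^(2*δ)) :=
          mul_le_mul_of_nonneg_left hlen hnn2
      _ = B2 * C^2 * r u v ^ (2*δ) := by rw [hB2def]; field_simp; ring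
  -- Step 3 : bound on ∂_u r (uses symmetry of mixed partials)
  have claim2u : ∀ a b : ℝ, ((a,b):ℝ×ℝ) ∈ Qset → a < b →
      |pdu r a b + 1/2| ≤ B2 * C^2 * r a b ^ (2*δ) := by
    intro u v hQ huv
    have hfc : ContinuousOn (fun s => pdu r u s) (Set.Icc u v) := by
      intro s hs
      obtain ⟨c, hc⟩ := ex_pdu_line_u hVo hrsm (hQV (hsegQ_u u v s hQ hs.1 hs.2))
      exact hc.continuousAt.continuousWithinAt
    have hfd : ∀ s ∈ Set.Ioo u v, HasDerivAt (fun v' => pdu r u v') (pdub (pdu r) u s) s := by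
      intro s hs
      obtain ⟨c, hc⟩ := ex_pdu_line_u hVo hrsm (hQV (hsegQ_u u v s hQ hs.1.le hs.2.le))
      exact hasDerivAt_rewrap_ub hc
    have hbd : ∀ s ∈ Set.Ioo u v, |pdub (pdu r) u s|
        ≤ ((κ*M^2*L^2*A^2/4)*C^2*(2*M)) * (s - u)^(2*δ-1) := by
      intro s hs
      have hQs := hsegQ_u u v s hQ hs.1.le hs.2.le
      have hEq : pdub (pdu r) u s = κ * (Ω u s)^2 * (g (φ u s))^2 / (4 * r u s) :=
        (pdu_pdub_comm hVo hrsm (hQV hQs)).trans (hN3 (u,s) hQs hs.1)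
      rw [hEq]
      have hnn : (0:ℝ) ≤ (κ*M^2*L^2*A^2/4)*C^2 := by positivity
      calc |κ * (Ω u s)^2 * (g (φ u s))^2 / (4 * r u s)|
          ≤ (κ*M^2*L^2*A^2/4)*C^2 * r u s ^(2*δ-1) := hN3bd u s hQs hs.1
        _ ≤ (κ*M^2*L^2*A^2/4)*C^2 * (2*M*(s-u)^(2*δ-1)) :=
            mul_le_mul_of_nonneg_left (hr_e (2*δ-1) (by linarith) (by linarith) u s hQs hs.1) hnn
        _ = ((κ*M^2*L^2*A^2/4)*C^2*(2*M)) * (s-u)^(2*δ-1) := by ring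
    have hkey := ftc_pow_left huv hδ2 hfc hfd hbd
    have haxu : pdu r u u = -(1/2) := (hax u ⟨hQ.1, le_trans hQ.2.1 hQ.2.2⟩).2.2.1
    rw [haxu, sub_neg_eq_add] at hkey
    have hlen := hlen_e (2*δ) hδ2.le h2δ1 u v hQ huv
    have hnn2 : (0:ℝ) ≤ ((κ*M^2*L^2*A^2/4)*C^2*(2*M))/(2*δ) := by positivity
    calc |pdu r u v + 1/2| ≤ ((κ*M^2*L^2*A^2/4)*C^2*(2*M))/(2*δ) * (v-u)^(2*δ) := hkey
      _ ≤ ((κ*M^2*L^2*A^2/4)*C^2*(2*M))/(2*δ) * (2*M*r u v^(2*δ)) :=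
          mul_le_mul_of_nonneg_left hlen hnn2
      _ = B2 * C^2 * r u v ^ (2*δ) := by rw [hB2def]; field_simp; ring
  -- Step 4 : r is close to ϱ
  have claim3 : ∀ a b : ℝ, ((a,b):ℝ×ℝ) ∈ Qset → a < b →
      |r a b - (b-a)/2| ≤ B3 * C^2 * r a b ^ (2*δ) * ((b-a)/2) := by
    intro u v hQ huv
    have hrv : (0:ℝ) < r u v := hrpos (u,v) hQ huv
    have hfc : ContinuousOn (fun s => r u s - s/2) (Set.Icc u v) := by
      intro s hs
      exact (((pdub_hasDerivAt' (diffAt_of_C2 hVo hrsm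
        (hQV (hsegQ_u u v s hQ hs.1 hs.2)))).continuousAt).sub
        ((continuous_id.div_const 2).continuousAt)).continuousWithinAt
    have hfd : ∀ s ∈ Set.Ioo u v, HasDerivAt (fun s => r u s - s/2) (pdub r u s - 1/2) s := by
      intro s hs
      exact (hasDerivAt_rewrap_ub (pdub_hasDerivAt' (diffAt_of_C2 hVo hrsm
        (hQV (hsegQ_u u v s hQ hs.1.le hs.2.le))))).sub ((hasDerivAt_id s).div_const 2)
    have hbd : ∀ s ∈ Set.Ioo u v, |pdub r u s - 1/2|
        ≤ (B2*M^2*C^2*r u v^(2*δ)) * (s - u)^((1:ℝ) - 1) := by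
      intro s hs
      have hQs := hsegQ_u u v s hQ hs.1.le hs.2.le
      have hrs : (0:ℝ) < r u s := hrpos (u,s) hQs hs.1
      rw [show ((1:ℝ) - 1) = 0 by norm_num, Real.rpow_zero, mul_one]
      have hcmp : r u s ≤ M^2 * r u v := by
        have h1 := hrub u s hQs
        have h2 := hrhigh u v hQ
        nlinarith [h1, h2, hs.2.le, hM0, mul_le_mul_of_nonneg_left h2 hM0.le]
      have hrp : r u s ^ (2*δ) ≤ M^2 * r u v ^ (2*δ) := by
        calc r u s ^ (2*δ) ≤ (M^2 * r u v) ^ (2*δ) :=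
              Real.rpow_le_rpow hrs.le hcmp hδ2.le
          _ ≤ M^2 * r u v ^ (2*δ) := rpow_high hrv.le (by nlinarith) hδ2.le h2δ1
      calc |pdub r u s - 1/2| ≤ B2 * C^2 * r u s ^ (2*δ) := claim2ub u s hQs hs.1
        _ ≤ B2 * C^2 * (M^2 * r u v ^(2*δ)) :=
            mul_le_mul_of_nonneg_left hrp (by positivity)
        _ = B2*M^2*C^2*r u v^(2*δ) := by ring
    have hkey := ftc_pow_left huv one_pos hfc hfd hbd
    have hax0 : r u u = 0 := (hax u ⟨hQ.1, le_trans hQ.2.1 hQ.2.2⟩).1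
    rw [Real.rpow_one] at hkey
    have heq : (fun s => r u s - s/2) v - ((fun s => r u s - s/2) u) = r u v - (v-u)/2 := by
      simp only [hax0]; ring
    rw [heq] at hkey
    calc |r u v - (v-u)/2| ≤ (B2*M^2*C^2*r u v^(2*δ))/1 * (v-u) := hkey
      _ = B3 * C^2 * r u v ^ (2*δ) * ((v-u)/2) := by rw [hB3def]; ring
  -- Step 5 : integrate (N2)
  have claim4 : ∀ a b : ℝ, ((a,b):ℝ×ℝ) ∈ Qset → a < b →
      |((Ω a b)^2)⁻¹ * pdub r a b - 1/2| ≤ B4 * C^2 * r a b ^ (2*δ) := by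
    intro u v hQ huv
    have hΩne : ∀ s, u ≤ s → s ≤ v → (Ω u s)^2 ≠ 0 := by
      intro s h1 h2
      have hlb : M⁻¹ ≤ Ω u s := (hΩb (u,s) (hsegQ_u u v s hQ h1 h2)).1
      have : 0 < Ω u s := lt_of_lt_of_le (inv_pos.2 hM0) hlb
      positivity
    have hfc : ContinuousOn (fun s => ((Ω u s)^2)⁻¹ * pdub r u s) (Set.Icc u v) := by
      intro s hs
      have hVs := hQV (hsegQ_u u v s hQ hs.1 hs.2)
      obtain ⟨c, hc⟩ := ex_pdub_line_u hVo hrsm hVs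
      have hΩc : ContinuousAt (fun v' => Ω u v') s :=
        (pdub_hasDerivAt' (diffAt_of_C2 hVo hΩsm hVs)).continuousAt
      exact (((hΩc.pow 2).inv₀ (hΩne s hs.1 hs.2)).mul hc.continuousAt).continuousWithinAt
    have hfd : ∀ s ∈ Set.Ioo u v, HasDerivAt (fun v' => ((Ω u v')^2)⁻¹ * pdub r u v')
        (-(((Ω u s)^2)⁻¹ * κ * r u s * (pdub φ u s)^2)) s := by
      intro s hs
      have hQs := hsegQ_u u v s hQ hs.1.le hs.2.le
      have hVs := hQV hQs
      have h1 := pdub_hasDerivAt' (diffAt_of_C2 hVo hΩsm hVs)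
      obtain ⟨c2, h2⟩ := ex_pdub_line_u hVo hrsm hVs
      have h3 := ((h1.pow 2).inv (hΩne s hs.1.le hs.2.le)).mul h2
      have h4 := hasDerivAt_rewrap_ub
        (f := fun u' v' => ((Ω u' v')^2)⁻¹ * pdub r u' v') (a := u) (b := s) h3
      have h5 : pdub (fun u' v' => ((Ω u' v')^2)⁻¹ * pdub r u' v') u s
          = -(((Ω u s)^2)⁻¹ * κ * r u s * (pdub φ u s)^2) := hN2 (u,s) hQs hs.1
      rwa [h5] at h4
    have hbd : ∀ s ∈ Set.Ioo u v, |(-(((Ω u s)^2)⁻¹ * κ * r u s * (pdub φ u s)^2))|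
        ≤ (κ*M^2*C^2*(2*M)) * (s - u)^(2*δ-1) := by
      intro s hs
      have hQs := hsegQ_u u v s hQ hs.1.le hs.2.le
      have hrs : (0:ℝ) < r u s := hrpos (u,s) hQs hs.1
      have hΩlb : M⁻¹ ≤ Ω u s := (hΩb (u,s) hQs).1
      have hΩpos : 0 < Ω u s := lt_of_lt_of_le (inv_pos.2 hM0) hΩlb
      have h1 : (1:ℝ) ≤ Ω u s * M := by
        have := mul_le_mul_of_nonneg_right hΩlb hM0.le
        rwa [inv_mul_cancel₀ hM0.ne'] at this
      have hinv : ((Ω u s)^2)⁻¹ ≤ M^2 := by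
        rw [← one_div, div_le_iff₀ (pow_pos hΩpos 2)]
        nlinarith
      have hsqr : r u s ^(δ-1) * r u s^(δ-1) = r u s^(2*δ-2) := by
        rw [← Real.rpow_add hrs]; congr 1; ring
      have hφ2 : (pdub φ u s)^2 ≤ C^2 * r u s^(2*δ-2) := by
        have hbt : |pdub φ u s| ≤ C * r u s ^ (δ-1) := hboot (u,s) hQs hs.1
        nlinarith [hbt, abs_nonneg (pdub φ u s), sq_abs (pdub φ u s),
          Real.rpow_nonneg hrs.le (δ-1), hC]
      have hrr : r u s * r u s^(2*δ-2) = r u s^(2*δ-1) := by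
        have h := Real.rpow_add hrs 1 (2*δ-2)
        rw [Real.rpow_one] at h
        rw [← h]; congr 1; ring
      have hnn : (0:ℝ) ≤ ((Ω u s)^2)⁻¹ * κ * r u s * (pdub φ u s)^2 :=
        mul_nonneg (mul_nonneg (mul_nonneg (by positivity) hκ.le) hrs.le) (sq_nonneg _)
      have m2 : ((Ω u s)^2)⁻¹ * κ * r u s ≤ M^2 * κ * r u s :=
        mul_le_mul_of_nonneg_right (mul_le_mul_of_nonneg_right hinv hκ.le) hrs.le
      have m3 : ((Ω u s)^2)⁻¹ * κ * r u s * (pdub φ u s)^2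
          ≤ (M^2 * κ * r u s) * (C^2 * r u s^(2*δ-2)) :=
        mul_le_mul m2 hφ2 (sq_nonneg _)
          (mul_nonneg (mul_nonneg (sq_nonneg M) hκ.le) hrs.le)
      calc |(-(((Ω u s)^2)⁻¹ * κ * r u s * (pdub φ u s)^2))|
          = ((Ω u s)^2)⁻¹ * κ * r u s * (pdub φ u s)^2 := by
            rw [abs_neg, abs_of_nonneg hnn]
        _ ≤ (M^2 * κ * r u s) * (C^2 * r u s^(2*δ-2)) := m3
        _ = κ*M^2*C^2 * (r u s * r u s^(2*δ-2)) := by ring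
        _ = κ*M^2*C^2 * r u s^(2*δ-1) := by rw [hrr]
        _ ≤ κ*M^2*C^2 * (2*M*(s-u)^(2*δ-1)) :=
            mul_le_mul_of_nonneg_left
              (hr_e (2*δ-1) (by linarith) (by linarith) u s hQs hs.1)
              (mul_nonneg (mul_nonneg hκ.le (sq_nonneg M)) (sq_nonneg C))
        _ = (κ*M^2*C^2*(2*M)) * (s-u)^(2*δ-1) := by ring
    have hkey := ftc_pow_left huv hδ2 hfc hfd hbd
    have haxΩ : Ω u u = 1 := (hax u ⟨hQ.1, le_trans hQ.2.1 hQ.2.2⟩).2.2.2.1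
    have haxr : pdub r u u = 1/2 := (hax u ⟨hQ.1, le_trans hQ.2.1 hQ.2.2⟩).2.1
    have hstart : ((Ω u u)^2)⁻¹ * pdub r u u = 1/2 := by rw [haxΩ, haxr]; norm_num
    rw [hstart] at hkey
    have hlen := hlen_e (2*δ) hδ2.le h2δ1 u v hQ huv
    have hnn2 : (0:ℝ) ≤ (κ*M^2*C^2*(2*M))/(2*δ) := by positivity
    calc |((Ω u v)^2)⁻¹ * pdub r u v - 1/2|
        ≤ (κ*M^2*C^2*(2*M))/(2*δ) * (v-u)^(2*δ) := hkey
      _ ≤ (κ*M^2*C^2*(2*M))/(2*δ) * (2*M*r u v^(2*δ)) := mul_le_mul_of_nonneg_left hlen hnn2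
      _ = B4 * C^2 * r u v ^ (2*δ) := by rw [hB4def]; field_simp
  -- Step 6 : Ω is close to 1
  have claim5 : ∀ a b : ℝ, ((a,b):ℝ×ℝ) ∈ Qset → a < b →
      |Ω a b - 1| ≤ B5 * C^2 * r a b ^ (2*δ) := by
    intro u v hQ huv
    have h4 := claim4 u v hQ huv
    have h2 := claim2ub u v hQ huv
    have hX14 : (1:ℝ)/4 ≤ pdub r u v := (hdrb (u,v) hQ).1
    have hXpos : 0 < pdub r u v := by linarith
    have hΩlb : M⁻¹ ≤ Ω u v := (hΩb (u,v) hQ).1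
    have hΩub : Ω u v ≤ M := (hΩb (u,v) hQ).2
    have hΩpos : 0 < Ω u v := lt_of_lt_of_le (inv_pos.2 hM0) hΩlb
    set a := ((Ω u v)^2)⁻¹ with hadef
    have hdiff : |a * pdub r u v - pdub r u v| ≤ (B4+B2)*C^2*r u v^(2*δ) := by
      have he : a * pdub r u v - pdub r u v
          = (a * pdub r u v - 1/2) - (pdub r u v - 1/2) := by ring
      rw [he]
      calc |(a * pdub r u v - 1/2) - (pdub r u v - 1/2)|
          ≤ |a * pdub r u v - 1/2| + |pdub r u v - 1/2| := abs_sub _ _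
        _ ≤ (B4+B2)*C^2*r u v^(2*δ) := by linarith
    have hfac : |a * pdub r u v - pdub r u v| = |a - 1| * pdub r u v := by
      rw [show a * pdub r u v - pdub r u v = (a - 1) * pdub r u v by ring, abs_mul,
        abs_of_pos hXpos]
    have ha1 : |a - 1| ≤ 4*((B4+B2)*C^2*r u v^(2*δ)) := by
      nlinarith [abs_nonneg (a-1), hfac, hdiff, hX14]
    have ha2 : (Ω u v)^2 * a = 1 := mul_inv_cancel₀ (pow_ne_zero 2 hΩpos.ne')
    have e1 : |(Ω u v)^2 - 1| = |Ω u v - 1| * (Ω u v + 1) := by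
      rw [show (Ω u v)^2 - 1 = (Ω u v - 1) * (Ω u v + 1) by ring, abs_mul,
        abs_of_pos (show (0:ℝ) < Ω u v + 1 by linarith)]
    have e2 : |(Ω u v)^2 - 1| = (Ω u v)^2 * |a - 1| := by
      have h : (Ω u v)^2 - 1 = -((Ω u v)^2 * (a - 1)) := by rw [mul_sub, ha2]; ring
      rw [h, abs_neg, abs_mul, abs_of_pos (pow_pos hΩpos 2)]
    have s1 : |Ω u v - 1| ≤ |Ω u v - 1| * (Ω u v + 1) := by
      nlinarith [abs_nonneg (Ω u v - 1)]
    have s2 : (Ω u v)^2 * |a-1| ≤ M^2 * |a-1| :=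
      mul_le_mul_of_nonneg_right (by nlinarith) (abs_nonneg _)
    have s3 : M^2*|a-1| ≤ M^2*(4*((B4+B2)*C^2*r u v^(2*δ))) :=
      mul_le_mul_of_nonneg_left ha1 (sq_nonneg M)
    calc |Ω u v - 1| ≤ |Ω u v - 1| * (Ω u v + 1) := s1
      _ = (Ω u v)^2 * |a-1| := e1.symm.trans e2
      _ ≤ M^2 * |a-1| := s2
      _ ≤ M^2*(4*((B4+B2)*C^2*r u v^(2*δ))) := s3
      _ = B5 * C^2 * r u v ^ (2*δ) := by rw [hB5def]; ring
  -- assemble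
  intro p hp hlt
  obtain ⟨u, v⟩ := p
  have hrv : (0:ℝ) < r u v := hrpos (u,v) hp hlt
  have hrpd : (0:ℝ) ≤ r u v ^ δ := Real.rpow_nonneg hrv.le δ
  have hrp2d : (0:ℝ) ≤ r u v ^ (2*δ) := Real.rpow_nonneg hrv.le (2*δ)
  have hC2 : (0:ℝ) ≤ C^2 := sq_nonneg C
  have hvr : (0:ℝ) ≤ (v-u)/2 := by
    have : u ≤ v := le_of_lt hlt
    linarith
  refine ⟨?_, ?_, ?_, ?_, ?_⟩
  · calc |φ u v| ≤ A * C * r u v ^ δ := claim1 u v hp hlt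
      _ ≤ (A + B2 + B3 + B5) * C * r u v ^ δ := by
          apply mul_le_mul_of_nonneg_right _ hrpd
          apply mul_le_mul_of_nonneg_right _ hC
          linarith
  · calc |pdu r u v + 1/2| ≤ B2 * C^2 * r u v ^ (2*δ) := claim2u u v hp hlt
      _ ≤ (A + B2 + B3 + B5) * C^2 * r u v ^ (2*δ) := by
          apply mul_le_mul_of_nonneg_right _ hrp2d
          apply mul_le_mul_of_nonneg_right _ hC2
          linarith
  · calc |pdub r u v - 1/2| ≤ B2 * C^2 * r u v ^ (2*δ) := claim2ub u v hp hlt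
      _ ≤ (A + B2 + B3 + B5) * C^2 * r u v ^ (2*δ) := by
          apply mul_le_mul_of_nonneg_right _ hrp2d
          apply mul_le_mul_of_nonneg_right _ hC2
          linarith
  · show |r u v - vrho (u,v)| ≤ _
    have hv : vrho (u,v) = (v-u)/2 := rfl
    rw [hv]
    calc |r u v - (v-u)/2| ≤ B3 * C^2 * r u v ^ (2*δ) * ((v-u)/2) := claim3 u v hp hlt
      _ ≤ (A + B2 + B3 + B5) * C^2 * r u v ^ (2*δ) * ((v-u)/2) := by
          apply mul_le_mul_of_nonneg_right _ hvr
          apply mul_le_mul_of_nonneg_right _ hrp2d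
          apply mul_le_mul_of_nonneg_right _ hC2
          linarith
  · calc |Ω u v - 1| ≤ B5 * C^2 * r u v ^ (2*δ) := claim5 u v hp hlt
      _ ≤ (A + B2 + B3 + B5) * C^2 * r u v ^ (2*δ) := by
          apply mul_le_mul_of_nonneg_right _ hrp2d
          apply mul_le_mul_of_nonneg_right _ hC2
          linarith
end

section
/- Let κ > 0, C₀ ≥ 1, L > 0 and M ≥ 1. Suppose Ω, r, φ satisfy on Q equations (N2) and (N3) and the axis normalization, together with: |g(y)| ≤ L|y| for all y ∈ ℝ; 1/M ≤ Ω ≤ M, r ≤ Mϱ and ∂_ū r ≥ 1/4 on Q; and the bounds |φ| ≤ C₀ r and |∂_ū φ| ≤ C₀ on Q. Then there exists C > 0, depending only on κ, L, M, C₀, such that on Q: |∂_u r + 1/2| ≤ C ϱ², |∂_ū r − 1/2| ≤ C ϱ², and |Ω − 1| ≤ C ϱ². -/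
open Real

section Helpers
variable {E : Type*} [NormedAddCommGroup E] [NormedSpace ℝ E]

lemma slice2 {R : ℝ × ℝ → E} {a b : ℝ} (h : DifferentiableAt ℝ R (a, b)) :
    HasDerivAt (fun v => R (a, v)) (fderiv ℝ R (a, b) ((0 : ℝ), (1 : ℝ))) b :=
  h.hasFDerivAt.comp_hasDerivAt b (HasDerivAt.prodMk (hasDerivAt_const b a) (hasDerivAt_id b))

lemma slice1 {R : ℝ × ℝ → E} {a b : ℝ} (h : DifferentiableAt ℝ R (a, b)) :
    HasDerivAt (fun u => R (u, b)) (fderiv ℝ R (a, b) ((1 : ℝ), (0 : ℝ))) a :=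
  h.hasFDerivAt.comp_hasDerivAt a (HasDerivAt.prodMk (hasDerivAt_id a) (hasDerivAt_const a b))

variable {V : Set (ℝ × ℝ)} {r : ℝ → ℝ → ℝ} {a b : ℝ}

lemma pdub_eq (hV : IsOpen V) (hr : ContDiffOn ℝ 2 (fun p : ℝ × ℝ => r p.1 p.2) V)
    (hab : (a, b) ∈ V) :
    pdub r a b = fderiv ℝ (fun p : ℝ × ℝ => r p.1 p.2) (a, b) ((0:ℝ), (1:ℝ)) :=
  (slice2 ((hr.contDiffAt (hV.mem_nhds hab)).differentiableAt (by norm_num))).deriv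

lemma pdu_eq (hV : IsOpen V) (hr : ContDiffOn ℝ 2 (fun p : ℝ × ℝ => r p.1 p.2) V)
    (hab : (a, b) ∈ V) :
    pdu r a b = fderiv ℝ (fun p : ℝ × ℝ => r p.1 p.2) (a, b) ((1:ℝ), (0:ℝ)) :=
  (slice1 ((hr.contDiffAt (hV.mem_nhds hab)).differentiableAt (by norm_num))).deriv

lemma D_diffAt (hV : IsOpen V) (hr : ContDiffOn ℝ 2 (fun p : ℝ × ℝ => r p.1 p.2) V)
    (hab : (a, b) ∈ V) :
    DifferentiableAt ℝ (fderiv ℝ (fun p : ℝ × ℝ => r p.1 p.2)) (a, b) := by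
  have h1 : ContDiffOn ℝ 1 (fderiv ℝ (fun p : ℝ × ℝ => r p.1 p.2)) V :=
    hr.fderiv_of_isOpen hV (by norm_num)
  exact ((h1.differentiableOn (by norm_num)) _ hab).differentiableAt (hV.mem_nhds hab)

lemma pdub_snd_hasDeriv (hV : IsOpen V) (hr : ContDiffOn ℝ 2 (fun p : ℝ × ℝ => r p.1 p.2) V)
    (hab : (a, b) ∈ V) :
    HasDerivAt (fun v => pdub r a v)
      (fderiv ℝ (fderiv ℝ (fun p : ℝ × ℝ => r p.1 p.2)) (a, b) ((0:ℝ),(1:ℝ)) ((0:ℝ),(1:ℝ))) b := by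
  set R := fun p : ℝ × ℝ => r p.1 p.2 with hR
  have hev : (fun v => pdub r a v) =ᶠ[nhds b] (fun v => fderiv ℝ R (a, v) ((0:ℝ),(1:ℝ))) := by
    filter_upwards [(hV.preimage (Continuous.prodMk_right a)).mem_nhds hab] with v hv
    exact pdub_eq hV hr hv
  have h2 := (slice2 (D_diffAt hV hr hab)).clm_apply (hasDerivAt_const b (((0:ℝ),(1:ℝ)) : ℝ × ℝ))
  simp only [map_zero, add_zero] at h2
  exact h2.congr_of_eventuallyEq hev

lemma pdub_fst_hasDeriv (hV : IsOpen V) (hr : ContDiffOn ℝ 2 (fun p : ℝ × ℝ => r p.1 p.2) V)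
    (hab : (a, b) ∈ V) :
    HasDerivAt (fun u => pdub r u b)
      (fderiv ℝ (fderiv ℝ (fun p : ℝ × ℝ => r p.1 p.2)) (a, b) ((1:ℝ),(0:ℝ)) ((0:ℝ),(1:ℝ))) a := by
  set R := fun p : ℝ × ℝ => r p.1 p.2 with hR
  have hev : (fun u => pdub r u b) =ᶠ[nhds a] (fun u => fderiv ℝ R (u, b) ((0:ℝ),(1:ℝ))) := by
    filter_upwards [(hV.preimage (continuous_id.prodMk continuous_const)).mem_nhds hab] with u hu
    exact pdub_eq hV hr hu
  have h2 := (slice1 (D_diffAt hV hr hab)).clm_apply (hasDerivAt_const a (((0:ℝ),(1:ℝ)) : ℝ × ℝ))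
  simp only [map_zero, add_zero] at h2
  exact h2.congr_of_eventuallyEq hev

lemma pdu_snd_hasDeriv (hV : IsOpen V) (hr : ContDiffOn ℝ 2 (fun p : ℝ × ℝ => r p.1 p.2) V)
    (hab : (a, b) ∈ V) :
    HasDerivAt (fun v => pdu r a v)
      (fderiv ℝ (fderiv ℝ (fun p : ℝ × ℝ => r p.1 p.2)) (a, b) ((0:ℝ),(1:ℝ)) ((1:ℝ),(0:ℝ))) b := by
  set R := fun p : ℝ × ℝ => r p.1 p.2 with hR
  have hev : (fun v => pdu r a v) =ᶠ[nhds b] (fun v => fderiv ℝ R (a, v) ((1:ℝ),(0:ℝ))) := by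
    filter_upwards [(hV.preimage (Continuous.prodMk_right a)).mem_nhds hab] with v hv
    exact pdu_eq hV hr hv
  have h2 := (slice2 (D_diffAt hV hr hab)).clm_apply (hasDerivAt_const b (((1:ℝ),(0:ℝ)) : ℝ × ℝ))
  simp only [map_zero, add_zero] at h2
  exact h2.congr_of_eventuallyEq hev

lemma schwarz (hV : IsOpen V) (hr : ContDiffOn ℝ 2 (fun p : ℝ × ℝ => r p.1 p.2) V)
    (hab : (a, b) ∈ V) :
    pdub (pdu r) a b = pdu (pdub r) a b := by
  set R := fun p : ℝ × ℝ => r p.1 p.2 with hR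
  have h1 : pdub (pdu r) a b
      = fderiv ℝ (fderiv ℝ R) (a, b) ((0:ℝ),(1:ℝ)) ((1:ℝ),(0:ℝ)) :=
    (pdu_snd_hasDeriv hV hr hab).deriv
  have h2 : pdu (pdub r) a b
      = fderiv ℝ (fderiv ℝ R) (a, b) ((1:ℝ),(0:ℝ)) ((0:ℝ),(1:ℝ)) :=
    (pdub_fst_hasDeriv hV hr hab).deriv
  have hsym := second_derivative_symmetric_of_eventually
    (f := R) (f' := fderiv ℝ R) (f'' := fderiv ℝ (fderiv ℝ R) (a, b)) (x := (a, b))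
    ?_ ((D_diffAt hV hr hab).hasFDerivAt) ((0:ℝ),(1:ℝ)) ((1:ℝ),(0:ℝ))
  · rw [h1, h2, hsym]
  · filter_upwards [hV.mem_nhds hab] with y hy
    exact (((hr.contDiffAt (hV.mem_nhds hy)).differentiableAt (by norm_num))).hasFDerivAt

lemma mvt_Ico {f f' : ℝ → ℝ} {a b C : ℝ}
    (hd : ∀ x ∈ Set.Icc a b, HasDerivAt f (f' x) x)
    (hb : ∀ x ∈ Set.Ico a b, |f' x| ≤ C) (hab : a ≤ b) :
    |f b - f a| ≤ C * (b - a) := by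
  have := norm_image_sub_le_of_norm_deriv_le_segment'
    (f := f) (f' := f') (a := a) (b := b) (C := C)
    (fun x hx => (hd x hx).hasDerivWithinAt) (fun x hx => hb x hx) b
    (Set.right_mem_Icc.2 hab)
  simpa using this

lemma mvt_Ioc {f f' : ℝ → ℝ} {a b C : ℝ}
    (hd : ∀ x ∈ Set.Icc a b, HasDerivAt f (f' x) x)
    (hb : ∀ x ∈ Set.Ioc a b, |f' x| ≤ C) (hab : a ≤ b) :
    |f b - f a| ≤ C * (b - a) := by
  have key : ∀ x ∈ Set.Icc a b,
      HasDerivAt (fun t => f (a + b - t)) (-(f' (a + b - x))) x := by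
    intro x hx
    have hmem : a + b - x ∈ Set.Icc a b := ⟨by linarith [hx.2], by linarith [hx.1]⟩
    have hinner : HasDerivAt (fun t : ℝ => a + b - t) (-1) x := by
      simpa using (hasDerivAt_id x).const_sub (a + b)
    have := (hd _ hmem).comp x hinner
    simpa [mul_comm, Function.comp_def] using this
  have hbd : ∀ x ∈ Set.Ico a b, |(-(f' (a + b - x)))| ≤ C := by
    intro x hx
    rw [abs_neg]
    exact hb _ ⟨by linarith [hx.2], by linarith [hx.1]⟩
  have h := mvt_Ico key hbd hab
  have he1 : a + b - b = a := by ring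
  have he2 : a + b - a = b := by ring
  rw [he1, he2] at h
  rwa [abs_sub_comm] at h

end Helpers

set_option maxHeartbeats 2000000 in
/-- Refined geometric bounds: under (N2), (N3), the axis normalization, and the uniform
bounds `|φ| ≤ C₀ r`, `|∂_ū φ| ≤ C₀` on `Q`, there is a constant `C > 0` depending only on
`κ, L, M, C₀` such that on `Q`: `|∂_u r + 1/2| ≤ Cϱ²`, `|∂_ū r − 1/2| ≤ Cϱ²` and
`|Ω − 1| ≤ Cϱ²`. -/
theorem refined_geometry_bounds
    (κ C₀ L M : ℝ) (hκ : 0 < κ) (hC₀ : 1 ≤ C₀) (hL : 0 < L) (hM : 1 ≤ M) :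
    ∃ C > (0:ℝ),
      ∀ (g : ℝ → ℝ) (Ω r φ : ℝ → ℝ → ℝ),
        ContDiff ℝ 1 g →
        SmoothNearQ 2 Ω r φ →
        (∀ p ∈ Qset, p.1 < p.2 → 0 < r p.1 p.2) →
        (∀ p ∈ Qset, p.1 < p.2 → EqN2 κ Ω r φ p.1 p.2) →
        (∀ p ∈ Qset, p.1 < p.2 → EqN3 κ g Ω r φ p.1 p.2) →
        AxisNormalized Ω r φ →
        (∀ y : ℝ, |g y| ≤ L * |y|) →
        (∀ p ∈ Qset, M⁻¹ ≤ Ω p.1 p.2 ∧ Ω p.1 p.2 ≤ M) →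
        (∀ p ∈ Qset, r p.1 p.2 ≤ M * vrho p) →
        (∀ p ∈ Qset, 1 / 4 ≤ pdub r p.1 p.2) →
        (∀ p ∈ Qset, |φ p.1 p.2| ≤ C₀ * r p.1 p.2) →
        (∀ p ∈ Qset, |pdub φ p.1 p.2| ≤ C₀) →
        ∀ p ∈ Qset,
          |pdu r p.1 p.2 + 1 / 2| ≤ C * vrho p ^ 2 ∧
          |pdub r p.1 p.2 - 1 / 2| ≤ C * vrho p ^ 2 ∧
          |Ω p.1 p.2 - 1| ≤ C * vrho p ^ 2 := by
  have hMp : (0:ℝ) < M := lt_of_lt_of_le one_pos hM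
  have hC₀p : (0:ℝ) < C₀ := lt_of_lt_of_le one_pos hC₀
  set c₁ : ℝ := κ * M ^ 3 * L ^ 2 * C₀ ^ 2 / 4 with hc₁def
  set c₂ : ℝ := κ * M ^ 3 * C₀ ^ 2 with hc₂def
  have hc₁ : 0 < c₁ := by
    apply div_pos _ (by norm_num)
    exact mul_pos (mul_pos (mul_pos hκ (pow_pos hMp 3)) (pow_pos hL 2)) (pow_pos hC₀p 2)
  have hc₂ : 0 < c₂ := mul_pos (mul_pos hκ (pow_pos hMp 3)) (pow_pos hC₀p 2)
  refine ⟨8 * M ^ 2 * (c₁ + c₂) + 2 * c₁ + 1, by nlinarith [pow_pos hMp 2], ?_⟩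
  intro g Ω r φ hg hsm hrpos hN2 hN3 hax hgL hΩb hrb hdrb hφb hdφb p hp
  obtain ⟨V, hV, hQV, hΩs, hrs, hφs⟩ := hsm
  obtain ⟨u, w⟩ := p
  obtain ⟨hu2, huw, hw0⟩ := hp
  simp only at hu2 huw hw0
  set ϱ : ℝ := (w - u) / 2 with hϱdef
  have hϱ0 : 0 ≤ ϱ := by simp only [hϱdef]; linarith
  have hvr : vrho (u, w) = ϱ := rfl
  have hQ1 : ∀ s ∈ Set.Icc u w, ((s, w) : ℝ × ℝ) ∈ Qset :=
    fun s hs => ⟨by simpa using by linarith [hs.1], by simpa using hs.2, by simpa using hw0⟩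
  have hQ2 : ∀ v ∈ Set.Icc u w, ((u, v) : ℝ × ℝ) ∈ Qset :=
    fun v hv => ⟨by simpa using hu2, by simpa using hv.1, by simpa using by linarith [hv.2]⟩
  -- uniform bound on the N3 right-hand side
  have hN3bound : ∀ x y : ℝ, ((x, y) : ℝ × ℝ) ∈ Qset → x < y →
      |κ * (Ω x y) ^ 2 * (g (φ x y)) ^ 2 / (4 * r x y)| ≤ c₁ * vrho (x, y) := by
    intro x y hm hxy
    have hr0 : 0 < r x y := hrpos (x, y) hm hxy
    have hΩ2 : (Ω x y) ^ 2 ≤ M ^ 2 := by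
      have h1 := (hΩb (x, y) hm).1
      have h2 := (hΩb (x, y) hm).2
      have h0 : (0:ℝ) < Ω x y := lt_of_lt_of_le (by positivity) h1
      nlinarith
    have hgb : |g (φ x y)| ≤ L * (C₀ * r x y) := by
      refine le_trans (hgL (φ x y)) ?_
      have := hφb (x, y) hm
      nlinarith
    have hg2 : (g (φ x y)) ^ 2 ≤ (L * (C₀ * r x y)) ^ 2 := by
      have h0 : (0:ℝ) ≤ |g (φ x y)| := abs_nonneg _
      nlinarith [sq_abs (g (φ x y))]
    have hrM : r x y ≤ M * vrho (x, y) := hrb (x, y) hm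
    have hϱxy : 0 ≤ vrho (x, y) := by
      simp only [vrho]
      show 0 ≤ (y - x) / 2
      linarith
    rw [abs_of_nonneg (div_nonneg
      (mul_nonneg (mul_nonneg hκ.le (sq_nonneg _)) (sq_nonneg _)) (by linarith))]
    rw [div_le_iff₀ (by linarith : (0:ℝ) < 4 * r x y)]
    have key2 : r x y ^ 2 ≤ (M * vrho (x, y)) * r x y := by nlinarith
    calc κ * (Ω x y) ^ 2 * (g (φ x y)) ^ 2
        ≤ κ * M ^ 2 * (g (φ x y)) ^ 2 :=
          mul_le_mul_of_nonneg_right (mul_le_mul_of_nonneg_left hΩ2 hκ.le) (sq_nonneg _)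
      _ ≤ κ * M ^ 2 * (L * (C₀ * r x y)) ^ 2 :=
          mul_le_mul_of_nonneg_left hg2 (mul_nonneg hκ.le (sq_nonneg M))
      _ = (κ * M ^ 2 * L ^ 2 * C₀ ^ 2) * (r x y) ^ 2 := by ring
      _ ≤ (κ * M ^ 2 * L ^ 2 * C₀ ^ 2) * ((M * vrho (x, y)) * r x y) :=
          mul_le_mul_of_nonneg_left key2
            (mul_nonneg (mul_nonneg (mul_nonneg hκ.le (sq_nonneg M)) (sq_nonneg L)) (sq_nonneg C₀))
      _ = c₁ * vrho (x, y) * (4 * r x y) := by rw [hc₁def]; ring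
  -- Step A: bound on pdub r
  have hA : |pdub r u w - 1 / 2| ≤ 2 * c₁ * ϱ ^ 2 := by
    have hax_w := hax w ⟨by linarith, hw0⟩
    have hd : ∀ s ∈ Set.Icc u w, HasDerivAt (fun s' => pdub r s' w) (pdu (pdub r) s w) s := by
      intro s hs
      have h := pdub_fst_hasDeriv hV hrs (hQV (hQ1 s hs))
      have e : pdu (pdub r) s w = _ := h.deriv
      rw [e]; exact h
    have hb : ∀ s ∈ Set.Ico u w, |pdu (pdub r) s w| ≤ c₁ * ϱ := by
      intro s hs
      have hm := hQ1 s ⟨hs.1, le_of_lt hs.2⟩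
      have h3 : EqN3 κ g Ω r φ s w := hN3 (s, w) hm hs.2
      unfold EqN3 at h3
      rw [h3]
      refine le_trans (hN3bound s w hm hs.2) ?_
      have hle : vrho (s, w) ≤ ϱ := by
        simp only [vrho, hϱdef]; linarith [hs.1]
      exact mul_le_mul_of_nonneg_left hle hc₁.le
    have h := mvt_Ico hd hb huw
    replace h : |pdub r w w - pdub r u w| ≤ c₁ * ϱ * (w - u) := h
    rw [hax_w.2.1] at h
    calc |pdub r u w - 1 / 2| = |(1:ℝ) / 2 - pdub r u w| := abs_sub_comm _ _
      _ ≤ c₁ * ϱ * (w - u) := h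
      _ = 2 * c₁ * ϱ ^ 2 := by rw [hϱdef]; ring
  -- Step B: bound on pdu r
  have hB : |pdu r u w + 1 / 2| ≤ 2 * c₁ * ϱ ^ 2 := by
    have hax_u := hax u ⟨hu2, by linarith⟩
    have hd : ∀ v ∈ Set.Icc u w, HasDerivAt (fun v' => pdu r u v') (pdub (pdu r) u v) v := by
      intro v hv
      have h := pdu_snd_hasDeriv hV hrs (hQV (hQ2 v hv))
      have e : pdub (pdu r) u v = _ := h.deriv
      rw [e]; exact h
    have hb : ∀ v ∈ Set.Ioc u w, |pdub (pdu r) u v| ≤ c₁ * ϱ := by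
      intro v hv
      have hm := hQ2 v ⟨le_of_lt hv.1, hv.2⟩
      rw [schwarz hV hrs (hQV hm)]
      have h3 : EqN3 κ g Ω r φ u v := hN3 (u, v) hm hv.1
      unfold EqN3 at h3
      rw [h3]
      refine le_trans (hN3bound u v hm hv.1) ?_
      have hle : vrho (u, v) ≤ ϱ := by
        simp only [vrho, hϱdef]; linarith [hv.2]
      exact mul_le_mul_of_nonneg_left hle hc₁.le
    have h := mvt_Ioc hd hb huw
    replace h : |pdu r u w - pdu r u u| ≤ c₁ * ϱ * (w - u) := h
    rw [hax_u.2.2.1, sub_neg_eq_add] at h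
    calc |pdu r u w + 1 / 2| ≤ c₁ * ϱ * (w - u) := h
      _ = 2 * c₁ * ϱ ^ 2 := by rw [hϱdef]; ring
  -- Step C: bound coming from N2
  have hC : |((Ω u w) ^ 2)⁻¹ * pdub r u w - 1 / 2| ≤ 2 * c₂ * ϱ ^ 2 := by
    have hax_u := hax u ⟨hu2, by linarith⟩
    have hd : ∀ v ∈ Set.Icc u w,
        HasDerivAt (fun v' => ((Ω u v') ^ 2)⁻¹ * pdub r u v')
          (pdub (fun u' v' => ((Ω u' v') ^ 2)⁻¹ * pdub r u' v') u v) v := by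
      intro v hv
      have hm := hQ2 v hv
      have hVm := hQV hm
      have hΩd : DifferentiableAt ℝ (fun v' => Ω u v') v :=
        (slice2 ((hΩs.contDiffAt (hV.mem_nhds hVm)).differentiableAt
          (by norm_num))).differentiableAt
      have hΩpos : 0 < Ω u v := lt_of_lt_of_le (inv_pos.2 hMp) (hΩb (u, v) hm).1
      have hrd : DifferentiableAt ℝ (fun v' => pdub r u v') v :=
        (pdub_snd_hasDeriv hV hrs hVm).differentiableAt
      have hdiff : DifferentiableAt ℝ (fun v' => ((Ω u v') ^ 2)⁻¹ * pdub r u v') v :=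
        ((hΩd.pow 2).inv (pow_ne_zero 2 hΩpos.ne')).mul hrd
      exact hdiff.hasDerivAt
    have hb : ∀ v ∈ Set.Ioc u w,
        |pdub (fun u' v' => ((Ω u' v') ^ 2)⁻¹ * pdub r u' v') u v| ≤ c₂ * ϱ := by
      intro v hv
      have hm := hQ2 v ⟨le_of_lt hv.1, hv.2⟩
      have h2 : EqN2 κ Ω r φ u v := hN2 (u, v) hm hv.1
      unfold EqN2 at h2
      rw [h2, abs_neg]
      have hΩpos : 0 < Ω u v := lt_of_lt_of_le (inv_pos.2 hMp) (hΩb (u, v) hm).1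
      have hr0 : 0 < r u v := hrpos (u, v) hm hv.1
      have hWle : ((Ω u v) ^ 2)⁻¹ ≤ M ^ 2 := by
        have h1 : (M⁻¹) ^ 2 ≤ (Ω u v) ^ 2 := by
          have := (hΩb (u, v) hm).1
          nlinarith [inv_pos.2 hMp]
        have h2' := inv_anti₀ (pow_pos (inv_pos.2 hMp) 2) h1
        rwa [inv_pow, inv_inv] at h2'
      have hrϱ : r u v ≤ M * ϱ := by
        refine le_trans (hrb (u, v) hm) ?_
        have hle : vrho (u, v) ≤ ϱ := by
          simp only [vrho, hϱdef]; linarith [hv.2]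
        exact mul_le_mul_of_nonneg_left hle hMp.le
      have hφ2 : (pdub φ u v) ^ 2 ≤ C₀ ^ 2 := by
        have := hdφb (u, v) hm
        nlinarith [sq_abs (pdub φ u v), abs_nonneg (pdub φ u v)]
      rw [abs_of_nonneg (by
        apply mul_nonneg (mul_nonneg (mul_nonneg (inv_nonneg.2 (sq_nonneg _)) hκ.le) hr0.le)
          (sq_nonneg _))]
      calc ((Ω u v) ^ 2)⁻¹ * κ * r u v * (pdub φ u v) ^ 2
          ≤ M ^ 2 * κ * r u v * (pdub φ u v) ^ 2 :=
            mul_le_mul_of_nonneg_right (mul_le_mul_of_nonneg_right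
              (mul_le_mul_of_nonneg_right hWle hκ.le) hr0.le) (sq_nonneg _)
        _ ≤ M ^ 2 * κ * (M * ϱ) * (pdub φ u v) ^ 2 :=
            mul_le_mul_of_nonneg_right
              (mul_le_mul_of_nonneg_left hrϱ (mul_nonneg (sq_nonneg M) hκ.le)) (sq_nonneg _)
        _ ≤ M ^ 2 * κ * (M * ϱ) * C₀ ^ 2 := by
            refine mul_le_mul_of_nonneg_left hφ2 ?_
            exact mul_nonneg (mul_nonneg (sq_nonneg M) hκ.le) (mul_nonneg hMp.le hϱ0)
        _ = c₂ * ϱ := by rw [hc₂def]; ring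
    have h := mvt_Ioc hd hb huw
    replace h : |((Ω u w) ^ 2)⁻¹ * pdub r u w - ((Ω u u) ^ 2)⁻¹ * pdub r u u|
        ≤ c₂ * ϱ * (w - u) := h
    have hFu : ((Ω u u) ^ 2)⁻¹ * pdub r u u = 1 / 2 := by
      rw [hax_u.2.2.2.1, hax_u.2.1]; norm_num
    rw [hFu] at h
    calc |((Ω u w) ^ 2)⁻¹ * pdub r u w - 1 / 2| ≤ c₂ * ϱ * (w - u) := h
      _ = 2 * c₂ * ϱ ^ 2 := by rw [hϱdef]; ring
  -- final algebra
  have hmQ : ((u, w) : ℝ × ℝ) ∈ Qset := ⟨hu2, huw, hw0⟩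
  have hΩm := hΩb (u, w) hmQ
  have hΩpos : 0 < Ω u w := lt_of_lt_of_le (inv_pos.2 hMp) hΩm.1
  have hd4 : 1 / 4 ≤ pdub r u w := hdrb (u, w) hmQ
  have h1 : |((Ω u w) ^ 2)⁻¹ * pdub r u w - pdub r u w| ≤ 2 * (c₁ + c₂) * ϱ ^ 2 := by
    calc |((Ω u w) ^ 2)⁻¹ * pdub r u w - pdub r u w|
        = |(((Ω u w) ^ 2)⁻¹ * pdub r u w - 1 / 2) + (1 / 2 - pdub r u w)| := by
          congr 1; ring
      _ ≤ |((Ω u w) ^ 2)⁻¹ * pdub r u w - 1 / 2| + |1 / 2 - pdub r u w| := abs_add_le _ _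
      _ ≤ 2 * c₂ * ϱ ^ 2 + 2 * c₁ * ϱ ^ 2 := add_le_add hC (by rw [abs_sub_comm]; exact hA)
      _ = 2 * (c₁ + c₂) * ϱ ^ 2 := by ring
  have hWd : |((Ω u w) ^ 2)⁻¹ - 1| * pdub r u w
      = |((Ω u w) ^ 2)⁻¹ * pdub r u w - pdub r u w| := by
    have habs := abs_mul (((Ω u w) ^ 2)⁻¹ - 1) (pdub r u w)
    rw [abs_of_pos (show (0:ℝ) < pdub r u w by linarith)] at habs
    rw [← habs]
    congr 1
    ring
  have hW1 : |((Ω u w) ^ 2)⁻¹ - 1| ≤ 8 * (c₁ + c₂) * ϱ ^ 2 := by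
    have h4 : 0 ≤ |((Ω u w) ^ 2)⁻¹ - 1| * (4 * pdub r u w - 1) :=
      mul_nonneg (abs_nonneg _) (by linarith)
    have h5 : |((Ω u w) ^ 2)⁻¹ - 1| * pdub r u w ≤ 2 * (c₁ + c₂) * ϱ ^ 2 := by
      rw [hWd]; exact h1
    nlinarith [h4, h5]
  have hΩW : (Ω u w) ^ 2 * ((Ω u w) ^ 2)⁻¹ = 1 := mul_inv_cancel₀ (pow_ne_zero 2 hΩpos.ne')
  have hΩ2M : (Ω u w) ^ 2 ≤ M ^ 2 := by nlinarith [hΩm.2, hΩpos]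
  have h2 : |(Ω u w) ^ 2 - 1| ≤ M ^ 2 * (8 * (c₁ + c₂) * ϱ ^ 2) := by
    have he : (Ω u w) ^ 2 - 1 = (Ω u w) ^ 2 * (1 - ((Ω u w) ^ 2)⁻¹) := by
      linear_combination hΩW
    rw [he, abs_mul, abs_of_nonneg (sq_nonneg _)]
    have habs : |1 - ((Ω u w) ^ 2)⁻¹| ≤ 8 * (c₁ + c₂) * ϱ ^ 2 := by
      rw [abs_sub_comm]; exact hW1
    exact mul_le_mul hΩ2M habs (abs_nonneg _) (sq_nonneg M)
  have h3 : |Ω u w - 1| ≤ |(Ω u w) ^ 2 - 1| := by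
    have hk : |Ω u w - 1| * (Ω u w + 1) = |(Ω u w) ^ 2 - 1| := by
      have habs := abs_mul (Ω u w - 1) (Ω u w + 1)
      rw [abs_of_pos (show (0:ℝ) < Ω u w + 1 by linarith)] at habs
      rw [← habs]
      congr 1
      ring
    nlinarith [hk, mul_nonneg (abs_nonneg (Ω u w - 1)) hΩpos.le, abs_nonneg (Ω u w - 1)]
  have hΩfin : |Ω u w - 1| ≤ 8 * M ^ 2 * (c₁ + c₂) * ϱ ^ 2 := by
    refine le_trans h3 (le_trans h2 ?_)
    nlinarith []
  refine ⟨?_, ?_, ?_⟩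
  · show |pdu r u w + 1 / 2| ≤ _ * vrho (u, w) ^ 2
    rw [hvr]
    nlinarith [hB, mul_nonneg (mul_nonneg (sq_nonneg M) hc₁.le) (sq_nonneg ϱ),
      mul_nonneg (mul_nonneg (sq_nonneg M) hc₂.le) (sq_nonneg ϱ), sq_nonneg ϱ]
  · show |pdub r u w - 1 / 2| ≤ _ * vrho (u, w) ^ 2
    rw [hvr]
    nlinarith [hA, mul_nonneg (mul_nonneg (sq_nonneg M) hc₁.le) (sq_nonneg ϱ),
      mul_nonneg (mul_nonneg (sq_nonneg M) hc₂.le) (sq_nonneg ϱ), sq_nonneg ϱ]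
  · show |Ω u w - 1| ≤ _ * vrho (u, w) ^ 2
    rw [hvr]
    nlinarith [hΩfin, mul_nonneg hc₁.le (sq_nonneg ϱ), sq_nonneg ϱ]
end
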